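/- Fix an integer N ≥ 1, pairwise distinct complex numbers u_1, …, u_N, an index m ∈ {1,…,N}, a complex number y ∉ {u_1,…,u_N}, and an integer r ≥ 0. Then ∑_{k ≠ m} 1 / ((u_k − y)^{r+1}·(u_k − u_m)·∏_{β ≠ k}(u_k − u_β)) = (∑_{β ≠ m} 1/(u_m − u_β)) / ((u_m − y)^{r+1}·∏_{k ≠ m}(u_m − u_k)) + (r+1) / ((u_m − y)^{r+2}·∏_{k ≠ m}(u_m − u_k)) + (1/r!)·(d^r/dy^r)[ 1/((u_m − y)·∏_{k=1}^{N}(y − u_k)) ]. -/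

import Mathlib

open Finset


private lemma hd13 (a b : ℂ) (n : ℕ) {y : ℂ} (hy : a ≠ y) :
    HasDerivAt (fun y => ((a - y) ^ n * b)⁻¹) ((n : ℂ) * ((a - y) ^ (n + 1) * b)⁻¹) y := by
  have hne : a - y ≠ 0 := sub_ne_zero.mpr hy
  have h1 : HasDerivAt (fun y : ℂ => a - y) (-1) y := (hasDerivAt_id y).const_sub a
  have h2 := h1.fun_pow n
  have h3 := (h2.fun_inv (pow_ne_zero n hne)).mul_const b⁻¹
  have heq : (fun y : ℂ => ((a - y) ^ n * b)⁻¹) = fun y => ((a - y) ^ n)⁻¹ * b⁻¹ := by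
    funext w; rw [mul_inv]
  rw [heq, mul_inv]
  refine h3.congr_deriv ?_
  rcases n with _ | k
  · simp
  · have key : ((a - y) ^ (k + 1 + 1))⁻¹ = (a - y) ^ (k + 1 - 1) / ((a - y) ^ (k + 1)) ^ 2 := by
      rw [Nat.add_sub_cancel, eq_div_iff (pow_ne_zero _ (pow_ne_zero _ hne)), inv_mul_eq_div,
        div_eq_iff (pow_ne_zero _ hne)]
      ring
    rw [key]; push_cast; ring


private lemma pf13 {ι : Type*} [DecidableEq ι] (v : ι → ℂ) (s : Finset ι) (hs : s.Nonempty) :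
    Set.InjOn v ↑s → ∀ w : ℂ, (∀ k ∈ s, w ≠ v k) →
    (∏ k ∈ s, (w - v k))⁻¹ = ∑ k ∈ s, ((w - v k) * ∏ β ∈ s.erase k, (v k - v β))⁻¹ := by
  induction hs using Finset.Nonempty.cons_induction with
  | singleton a => intro _ w hw; simp
  | cons a s ha hs ih =>
    intro hinj w hw
    have hsub : (s : Set ι) ⊆ ↑(Finset.cons a s ha) := by
      intro x hx; simp [Finset.mem_coe] at hx ⊢; exact Or.inr hx
    have hinj' : Set.InjOn v ↑s := hinj.mono hsub
    have hva : ∀ k ∈ s, v a ≠ v k := by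
      intro k hk h
      exact ha ((hinj (by simp) (by simp [hk]) h) ▸ hk)
    have hw' : ∀ k ∈ s, w ≠ v k := fun k hk => hw k (by simp [hk])
    have hwa : w ≠ v a := hw a (by simp)
    have hPne : ∀ k ∈ s, (∏ β ∈ s.erase k, (v k - v β)) ≠ 0 := by
      intro k hk
      refine Finset.prod_ne_zero_iff.mpr fun β hβ => sub_ne_zero.mpr ?_
      intro h
      exact (Finset.mem_erase.mp hβ).1 ((hinj' (hk) (by simp [(Finset.mem_erase.mp hβ).2]) h)).symm
    rw [Finset.prod_cons, Finset.sum_cons, Finset.erase_cons, mul_inv, ih hinj' w hw']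
    have h2 : ((w - v a) * ∏ β ∈ s, (v a - v β))⁻¹
        = (w - v a)⁻¹ * ∑ k ∈ s, ((v a - v k) * ∏ β ∈ s.erase k, (v k - v β))⁻¹ := by
      rw [mul_inv, ih hinj' (v a) hva]
    rw [h2]
    have h3 : ∀ x ∈ s, ((w - v x) * ∏ β ∈ (Finset.cons a s ha).erase x, (v x - v β))⁻¹
        = ((w - v x) * ((v x - v a) * ∏ β ∈ s.erase x, (v x - v β)))⁻¹ := by
      intro x hx
      have hxa : x ≠ a := fun h => ha (h ▸ hx)
      rw [Finset.erase_cons_of_ne ha (Ne.symm hxa), Finset.prod_cons]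
    rw [Finset.sum_congr rfl h3, Finset.mul_sum, Finset.mul_sum, ← Finset.sum_add_distrib]
    refine Finset.sum_congr rfl fun k hk => ?_
    have h4 : w - v a ≠ 0 := sub_ne_zero.mpr hwa
    have h5 : w - v k ≠ 0 := sub_ne_zero.mpr (hw' k hk)
    have h6 : v a - v k ≠ 0 := sub_ne_zero.mpr (hva k hk)
    have h7 : v k - v a ≠ 0 := sub_ne_zero.mpr fun h => (hva k hk) h.symm
    have h8 := hPne k hk
    field_simp
    ring

private lemma aux13 {ι : Type*} [DecidableEq ι] (v : ι → ℂ) (s : Finset ι)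
    (hinj : Set.InjOn v ↑s) (a : ℂ) (ha : ∀ k ∈ s, a ≠ v k) :
    ∑ k ∈ s, ((a - v k) ^ 2 * ∏ β ∈ s.erase k, (v k - v β))⁻¹
      = (∑ β ∈ s, (a - v β)⁻¹) * (∏ β ∈ s, (a - v β))⁻¹ := by
  rcases s.eq_empty_or_nonempty with rfl | hs
  · simp
  have hane : ∀ k ∈ s, a - v k ≠ 0 := fun k hk => sub_ne_zero.mpr (ha k hk)
  have hprodne : (∏ β ∈ s, (a - v β)) ≠ 0 := Finset.prod_ne_zero_iff.mpr hane
  set V : Set ℂ := {w | ∀ k ∈ s, w ≠ v k} with hV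
  have hVeq : V = (↑(s.image v) : Set ℂ)ᶜ := by
    ext w; simp [hV, eq_comm, not_exists]
  have hVopen : IsOpen V := by
    rw [hVeq]; exact (s.image v).finite_toSet.isClosed.isOpen_compl
  have haV : a ∈ V := ha
  have hev : (fun w => (∏ k ∈ s, (w - v k))⁻¹)
      =ᶠ[nhds a] (fun w => ∑ k ∈ s, ((w - v k) * ∏ β ∈ s.erase k, (v k - v β))⁻¹) :=
    Filter.eventuallyEq_of_mem (hVopen.mem_nhds haV) (fun w hw => pf13 v s hs hinj w hw)
  have hdeq := hev.deriv_eq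
  -- LHS derivative
  have hg : HasDerivAt (fun w => ∏ k ∈ s, (w - v k))
      (∑ k ∈ s, ∏ β ∈ s.erase k, (a - v β)) a := by
    have := HasDerivAt.fun_finsetProd (u := s) (f := fun k w => w - v k)
      (f' := fun _ => (1 : ℂ)) (fun i _ => (hasDerivAt_id a).sub_const (v i))
    simpa using this
  have hL : deriv (fun w => (∏ k ∈ s, (w - v k))⁻¹) a
      = -(∑ k ∈ s, ∏ β ∈ s.erase k, (a - v β)) / (∏ β ∈ s, (a - v β)) ^ 2 :=
    (hg.inv hprodne).deriv
  -- RHS derivative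
  have hR : deriv (fun w => ∑ k ∈ s, ((w - v k) * ∏ β ∈ s.erase k, (v k - v β))⁻¹) a
      = ∑ k ∈ s, -(((a - v k) ^ 2)⁻¹ * (∏ β ∈ s.erase k, (v k - v β))⁻¹) := by
    refine (HasDerivAt.fun_sum fun k hk => ?_).deriv
    have h1 : HasDerivAt (fun w : ℂ => w - v k) 1 a := (hasDerivAt_id a).sub_const (v k)
    have h2 := (h1.fun_inv (hane k hk)).mul_const (∏ β ∈ s.erase k, (v k - v β))⁻¹
    have heq : (fun w : ℂ => ((w - v k) * ∏ β ∈ s.erase k, (v k - v β))⁻¹)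
        = fun w => (w - v k)⁻¹ * (∏ β ∈ s.erase k, (v k - v β))⁻¹ := by
      funext w; rw [mul_inv]
    rw [heq]
    refine h2.congr_deriv ?_
    field_simp
  rw [hL, hR] at hdeq
  -- now algebra
  have hg' : (∑ k ∈ s, ∏ β ∈ s.erase k, (a - v β))
      = (∑ β ∈ s, (a - v β)⁻¹) * (∏ β ∈ s, (a - v β)) := by
    rw [Finset.sum_mul]
    refine Finset.sum_congr rfl fun k hk => ?_
    rw [← Finset.mul_prod_erase s _ hk, ← mul_assoc, inv_mul_cancel₀ (hane k hk), one_mul]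
  have : ∑ k ∈ s, ((a - v k) ^ 2 * ∏ β ∈ s.erase k, (v k - v β))⁻¹
      = ∑ k ∈ s, ((a - v k) ^ 2)⁻¹ * (∏ β ∈ s.erase k, (v k - v β))⁻¹ := by
    refine Finset.sum_congr rfl fun k hk => by rw [mul_inv]
  rw [this]
  have h9 : ∑ k ∈ s, ((a - v k) ^ 2)⁻¹ * (∏ β ∈ s.erase k, (v k - v β))⁻¹
      = (∑ β ∈ s, (a - v β)⁻¹) * (∏ β ∈ s, (a - v β)) / (∏ β ∈ s, (a - v β)) ^ 2 := by
    have h := hdeq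
    rw [hg', neg_div, Finset.sum_neg_distrib] at h
    exact (neg_injective h).symm
  rw [h9]
  field_simp

private lemma split13 (m' k' y Q : ℂ) (h1 : m' - y ≠ 0) (h2 : y - k' ≠ 0) (h3 : m' - k' ≠ 0) :
    (m' - y)⁻¹ * ((y - k') * Q)⁻¹
      = ((k' - y) ^ 1 * ((k' - m') * Q))⁻¹ + (m' - y)⁻¹ * ((m' - k') * Q)⁻¹ := by
  rcases eq_or_ne Q 0 with rfl | hQ
  · simp
  · have h4 : k' - y ≠ 0 := fun h => h2 (by linear_combination -h)
    have h5 : k' - m' ≠ 0 := fun h => h3 (by linear_combination -h)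
    field_simp
    ring

private lemma key13 (N : ℕ) (u : Fin N → ℂ) (hu : Function.Injective u) (m : Fin N) :
    ∀ (r : ℕ), ∀ y : ℂ, (∀ k, y ≠ u k) →
    iteratedDeriv r (fun w => ((u m - w) * ∏ k, (w - u k))⁻¹) y
      = (r.factorial : ℂ) *
        (∑ k ∈ univ.erase m, ((u k - y) ^ (r+1) * ((u k - u m) * ∏ β ∈ univ.erase k, (u k - u β)))⁻¹
         - (∑ β ∈ univ.erase m, (u m - u β)⁻¹) * ((u m - y) ^ (r+1) * ∏ k ∈ univ.erase m, (u m - u k))⁻¹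
         - ((r : ℂ) + 1) * ((u m - y) ^ (r+2) * ∏ k ∈ univ.erase m, (u m - u k))⁻¹) := by
  have hinj : Set.InjOn u ↑(univ : Finset (Fin N)) := Function.Injective.injOn hu
  have hinj' : Set.InjOn u ↑(univ.erase m) := hinj.mono (by intro x hx; simp)
  intro r
  induction r with
  | zero =>
    intro y hy
    have hmy : u m - y ≠ 0 := sub_ne_zero.mpr (Ne.symm (hy m))
    have hky : ∀ k, u k - y ≠ 0 := fun k => sub_ne_zero.mpr (Ne.symm (hy k))
    have hyk : ∀ k, y - u k ≠ 0 := fun k => sub_ne_zero.mpr (hy k)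
    have humk : ∀ k ∈ univ.erase m, u m - u k ≠ 0 := by
      intro k hk
      exact sub_ne_zero.mpr fun h => (Finset.mem_erase.mp hk).1 (hu h).symm
    rw [iteratedDeriv_zero]
    have step1 := pf13 u univ ⟨m, mem_univ m⟩ hinj y (fun k _ => hy k)
    have e1 : ((u m - y) * ∏ k, (y - u k))⁻¹
        = ∑ k ∈ univ.erase m, (u m - y)⁻¹ * ((y - u k) * ∏ β ∈ univ.erase k, (u k - u β))⁻¹
          + (u m - y)⁻¹ * ((y - u m) * ∏ β ∈ univ.erase m, (u m - u β))⁻¹ := by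
      rw [mul_inv, step1, ← Finset.sum_erase_add univ _ (mem_univ m), mul_add, Finset.mul_sum]
    -- the m-term
    have e2 : (u m - y)⁻¹ * ((y - u m) * ∏ β ∈ univ.erase m, (u m - u β))⁻¹
        = -(((u m - y) ^ 2 * ∏ k ∈ univ.erase m, (u m - u k))⁻¹) := by
      have hym : y - u m = -(u m - y) := by ring
      rw [hym, mul_inv, inv_neg, mul_inv, sq, mul_inv]
      ring
    -- the k-terms split
    have e3 : ∀ k ∈ univ.erase m,
        (u m - y)⁻¹ * ((y - u k) * ∏ β ∈ univ.erase k, (u k - u β))⁻¹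
        = ((u k - y) ^ 1 * ((u k - u m) * ∏ β ∈ univ.erase k, (u k - u β)))⁻¹
          + (u m - y)⁻¹ * ((u m - u k) * ∏ β ∈ univ.erase k, (u k - u β))⁻¹ := by
      intro k hk
      exact split13 (u m) (u k) y _ hmy (hyk k) (humk k hk)
    -- the correction sum
    have e4 : ∑ k ∈ univ.erase m, ((u m - u k) * ∏ β ∈ univ.erase k, (u k - u β))⁻¹
        = -((∑ β ∈ univ.erase m, (u m - u β)⁻¹) * (∏ k ∈ univ.erase m, (u m - u k))⁻¹) := by
      have e5 : ∀ k ∈ univ.erase m,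
          ((u m - u k) * ∏ β ∈ univ.erase k, (u k - u β))⁻¹
          = -(((u m - u k) ^ 2 * ∏ β ∈ (univ.erase m).erase k, (u k - u β))⁻¹) := by
        intro k hk
        have hm : m ∈ univ.erase k := by
          simp [Ne.symm (Finset.mem_erase.mp hk).1]
        rw [← Finset.mul_prod_erase _ _ hm, Finset.erase_right_comm]
        have hkm : u k - u m = -(u m - u k) := by ring
        rw [hkm, mul_inv, mul_inv, inv_neg, mul_inv, sq, mul_inv]
        ring
      rw [Finset.sum_congr rfl e5, Finset.sum_neg_distrib,
        aux13 u (univ.erase m) hinj' (u m)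
          (fun k hk => fun h => (Finset.mem_erase.mp hk).1 (hu h).symm)]
    rw [e1, e2, Finset.sum_congr rfl e3, Finset.sum_add_distrib, ← Finset.mul_sum, e4]
    simp only [Nat.factorial_zero, Nat.cast_one, mul_inv, zero_add, pow_one, one_mul]
    ring
  | succ r IH =>
    intro y hy
    have hmy : u m ≠ y := Ne.symm (hy m)
    have hky : ∀ k, u k ≠ y := fun k => Ne.symm (hy k)
    set A := ∑ β ∈ univ.erase m, (u m - u β)⁻¹ with hA
    set G := ∏ k ∈ univ.erase m, (u m - u k) with hG
    set D : Fin N → ℂ := fun k => (u k - u m) * ∏ β ∈ univ.erase k, (u k - u β) with hD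
    set Φ : ℂ → ℂ := fun y => (r.factorial : ℂ) *
        (∑ k ∈ univ.erase m, ((u k - y) ^ (r+1) * D k)⁻¹
         - A * ((u m - y) ^ (r+1) * G)⁻¹
         - ((r : ℂ) + 1) * ((u m - y) ^ (r+2) * G)⁻¹) with hΦ
    have hderiv : HasDerivAt Φ ((r.factorial : ℂ) *
        (∑ k ∈ univ.erase m, ((r : ℂ) + 1) * ((u k - y) ^ (r+2) * D k)⁻¹
         - A * (((r : ℂ) + 1) * ((u m - y) ^ (r+2) * G)⁻¹)
         - ((r : ℂ) + 1) * (((r : ℂ) + 2) * ((u m - y) ^ (r+3) * G)⁻¹))) y := by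
      have h1 : HasDerivAt (fun y => ∑ k ∈ univ.erase m, ((u k - y) ^ (r+1) * D k)⁻¹)
          (∑ k ∈ univ.erase m, ((r : ℂ) + 1) * ((u k - y) ^ (r+2) * D k)⁻¹) y := by
        refine HasDerivAt.fun_sum fun k hk => ?_
        have := hd13 (u k) (D k) (r+1) (hky k)
        push_cast at this
        convert this using 2
      have h2 := (hd13 (u m) G (r+1) hmy).const_mul A
      have h3 := (hd13 (u m) G (r+2) hmy).const_mul ((r : ℂ) + 1)
      push_cast at h2 h3
      exact ((h1.sub h2).sub h3).const_mul _
    have hU : IsOpen {w : ℂ | ∀ k, w ≠ u k} := by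
      have : {w : ℂ | ∀ k, w ≠ u k} = (↑((univ : Finset (Fin N)).image u) : Set ℂ)ᶜ := by
        ext w; simp [eq_comm]
      rw [this]
      exact (Finset.finite_toSet _).isClosed.isOpen_compl
    have hev : iteratedDeriv r (fun w => ((u m - w) * ∏ k, (w - u k))⁻¹) =ᶠ[nhds y] Φ :=
      Filter.eventuallyEq_of_mem (hU.mem_nhds hy) (fun w hw => IH w hw)
    have : iteratedDeriv (r+1) (fun w => ((u m - w) * ∏ k, (w - u k))⁻¹) y
        = deriv Φ y := by
      rw [iteratedDeriv_succ]
      exact hev.deriv_eq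
    rw [this, hderiv.deriv]
    rw [← Finset.mul_sum]
    push_cast [Nat.factorial_succ]
    ring

theorem stmt13 (N : ℕ) (hN : 1 ≤ N) (u : Fin N → ℂ) (hu : Function.Injective u)
    (m : Fin N) (y : ℂ) (hy : ∀ k, y ≠ u k) (r : ℕ) :
    ∑ k ∈ univ.erase m,
        1 / ((u k - y) ^ (r + 1) * (u k - u m) * ∏ β ∈ univ.erase k, (u k - u β)) =
      (∑ β ∈ univ.erase m, 1 / (u m - u β)) /
          ((u m - y) ^ (r + 1) * ∏ k ∈ univ.erase m, (u m - u k)) +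
        ((r : ℂ) + 1) / ((u m - y) ^ (r + 2) * ∏ k ∈ univ.erase m, (u m - u k)) +
        (1 / (Nat.factorial r : ℂ)) *
          iteratedDeriv r (fun w => 1 / ((u m - w) * ∏ k : Fin N, (w - u k))) y := by
  have hfac : (Nat.factorial r : ℂ) ≠ 0 := Nat.cast_ne_zero.mpr (Nat.factorial_ne_zero r)
  simp only [one_div]
  rw [key13 N u hu m r y hy]
  simp only [div_eq_mul_inv, mul_assoc]
  rw [← mul_assoc ((Nat.factorial r : ℂ))⁻¹, inv_mul_cancel₀ hfac, one_mul]
  ring
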